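/- arXiv:1010.3889 — 3 statements merged into one kernel-verified Lean document; each statement's English description precedes it below -/
import Mathlib

section
/- (Equation (21)) For all m, n, k ∈ ℕ with k ≤ n and k ≤ m, the fermionic p-adic q-integral of x ↦ B_{k,n}(x,q)·B_{k,m}(x,q) exists and ∫_{ℤ_p} B_{k,n}(x,q)·B_{k,m}(x,q) dμ_{−q}(x) = C(n,k)·C(m,k)·Σ_{l=0}^{2k} C(2k,l)·(−1)^{l+2k}·ξ_{n+m−l,1/q}(2), where ξ_{j,1/q} denotes the q-Euler polynomial with parameter 1/q in place of q. -/
open Finset Filter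

/-- `[a]_q = (1 - q^a)/(1 - q)` for `a : ℤ`. -/
noncomputable def qnum {p : ℕ} [Fact p.Prime] (q : ℚ_[p]) (a : ℤ) : ℚ_[p] :=
  (1 - q ^ a) / (1 - q)

/-- Kim's q-Euler polynomial `ξ_{n,q}(x)` (closed form). -/
noncomputable def xi {p : ℕ} [Fact p.Prime] (q : ℚ_[p]) (n : ℕ) (x : ℤ) : ℚ_[p] :=
  ((1 + q) / (1 - q) ^ n) *
    ∑ l ∈ Finset.range (n + 1),
      (n.choose l : ℚ_[p]) * (-1) ^ l * q ^ ((l : ℤ) * x) / (1 + q ^ (l + 1))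

/-- The fermionic p-adic `r`-integral statement:
`∫_{ℤ_p} g dμ_{-r} = L` means the Riemann-type sums
`(1/[p^N]_{-r}) · Σ_{x=0}^{p^N-1} g(x) (-r)^x` converge to `L`. -/
def fermionicIntegral (p : ℕ) [Fact p.Prime] (r : ℚ_[p]) (g : ℕ → ℚ_[p]) (L : ℚ_[p]) : Prop :=
  Filter.Tendsto
    (fun N : ℕ => ((1 + r) / (1 - (-r) ^ (p ^ N))) * ∑ x ∈ Finset.range (p ^ N), g x * (-r) ^ x)
    Filter.atTop (nhds L)

/-- The q-Bernstein polynomial `B_{k,n}(x,q) = C(n,k) [x]_q^k [1-x]_{1/q}^{n-k}`. -/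
noncomputable def bern {p : ℕ} [Fact p.Prime] (q : ℚ_[p]) (k n : ℕ) (x : ℤ) : ℚ_[p] :=
  (n.choose k : ℚ_[p]) * (qnum q x) ^ k * (qnum q⁻¹ (1 - x)) ^ (n - k)

section Aux

variable {p : ℕ} [Fact p.Prime]

lemma two_norm_one (hp : Odd p) : ‖(2 : ℚ_[p])‖ = 1 := by
  have hple := Padic.norm_int_le_one (p := p) 2
  have hdvd : ¬ ((p : ℤ) ∣ 2) := by
    intro h
    have h' : p ∣ 2 := by exact_mod_cast h
    have := ((Nat.prime_dvd_prime_iff_eq (Fact.out : p.Prime) Nat.prime_two).mp h')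
    rw [this] at hp
    simp [Nat.odd_iff] at hp
  have := (Padic.norm_intCast_lt_one_iff (p := p) (k := 2)).not.mpr hdvd
  push_cast at hple this ⊢
  linarith [lt_or_ge ‖(2:ℚ_[p])‖ 1]

lemma norm_q_one {q : ℚ_[p]} (hq : ‖1 - q‖ < 1) : ‖q‖ = 1 := by
  have h1 : ‖(1 : ℚ_[p])‖ = 1 := norm_one
  have hle : ‖q‖ ≤ 1 := by
    have := Padic.nonarchimedean 1 (-(1 - q))
    simp only [← sub_eq_add_neg] at this
    simp only [show (1 : ℚ_[p]) - (1 - q) = q by ring] at this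
    calc ‖q‖ ≤ max ‖(1:ℚ_[p])‖ ‖-(1-q)‖ := this
    _ ≤ 1 := by rw [norm_neg, h1]; exact max_le le_rfl hq.le
  have hge : (1:ℝ) ≤ ‖q‖ := by
    have := Padic.nonarchimedean q (1 - q)
    simp only [show q + (1 - q) = (1:ℚ_[p]) by ring, h1] at this
    rcases max_cases ‖q‖ ‖1 - q‖ with ⟨h, _⟩ | ⟨h, _⟩
    · rw [h] at this; exact this
    · rw [h] at this; linarith
  linarith

lemma pow_sub_one_norm {q : ℚ_[p]} (hq : ‖1 - q‖ < 1) (j : ℕ) : ‖q ^ j - 1‖ < 1 := by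
  induction j with
  | zero => simpa using zero_lt_one
  | succ j ih =>
    have key : q ^ (j + 1) - 1 = q ^ j * (q - 1) + (q ^ j - 1) := by ring
    rw [key]
    calc ‖q ^ j * (q - 1) + (q ^ j - 1)‖ ≤ max ‖q ^ j * (q - 1)‖ ‖q ^ j - 1‖ :=
          Padic.nonarchimedean _ _
    _ < 1 := by
        apply max_lt _ ih
        rw [norm_mul, norm_pow, norm_q_one hq, one_pow, one_mul, ← norm_neg]
        simpa using hq

lemma one_add_norm {a : ℚ_[p]} (hp : Odd p) (ha : ‖a - 1‖ < 1) : ‖1 + a‖ = 1 := by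
  have h2 := two_norm_one (p := p) hp
  have hle : ‖1 + a‖ ≤ 1 := by
    have := Padic.nonarchimedean (2 : ℚ_[p]) (a - 1)
    simp only [show (2:ℚ_[p]) + (a - 1) = 1 + a by ring, h2] at this
    exact this.trans (max_le le_rfl ha.le)
  have hge : (1:ℝ) ≤ ‖1 + a‖ := by
    have := Padic.nonarchimedean (1 + a) (-(a - 1))
    simp only [show (1 + a) + -(a - 1) = (2:ℚ_[p]) by ring, h2, norm_neg] at this
    rcases max_cases ‖1 + a‖ ‖a - 1‖ with ⟨h, _⟩ | ⟨h, _⟩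
    · rw [h] at this; exact this
    · rw [h] at this; linarith
  linarith

lemma one_add_ne_zero {a : ℚ_[p]} (hp : Odd p) (ha : ‖a - 1‖ < 1) : 1 + a ≠ 0 := by
  intro h
  have := one_add_norm hp ha
  rw [h, norm_zero] at this
  exact one_ne_zero this.symm

lemma one_add_pow_ne_zero {q : ℚ_[p]} (hp : Odd p) (hq : ‖1 - q‖ < 1) (j : ℕ) :
    1 + q ^ j ≠ 0 :=
  one_add_ne_zero hp (pow_sub_one_norm hq j)

/-- single Frobenius-type step -/
lemma step_bound {q : ℚ_[p]} (hq : ‖1 - q‖ < 1) {a : ℚ_[p]}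
    (ha : ‖a - 1‖ ≤ ‖1 - q‖) :
    ‖a ^ p - 1‖ ≤ max ‖(p : ℚ_[p])‖ ‖1 - q‖ * ‖a - 1‖ := by
  have ha1 : ‖a - 1‖ ≤ 1 := ha.trans hq.le
  have hexp : a ^ p - 1 = ∑ i ∈ range p, (a - 1) ^ (i + 1) * ((p.choose (i + 1) : ℚ_[p])) := by
    have h := add_pow (a - 1) 1 p
    simp only [one_pow, mul_one, sub_add_cancel] at h
    rw [h, Finset.sum_range_succ']
    simp
  rw [hexp]
  apply IsUltrametricDist.norm_sum_le_of_forall_le_of_nonneg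
  · positivity
  · intro i _
    rcases i with _ | i
    · rw [pow_one, norm_mul]
      have : ‖((p.choose 1 : ℚ_[p]))‖ ≤ ‖(p : ℚ_[p])‖ := by
        simp [Nat.choose_one_right]
      calc ‖a - 1‖ * ‖((p.choose 1 : ℚ_[p]))‖ ≤ ‖a - 1‖ * ‖(p : ℚ_[p])‖ :=
            mul_le_mul_of_nonneg_left this (norm_nonneg _)
      _ = ‖(p : ℚ_[p])‖ * ‖a - 1‖ := mul_comm _ _
      _ ≤ max ‖(p : ℚ_[p])‖ ‖1 - q‖ * ‖a - 1‖ :=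
            mul_le_mul_of_nonneg_right (le_max_left _ _) (norm_nonneg _)
    · rw [norm_mul, norm_pow]
      have hch : ‖((p.choose (i + 2) : ℚ_[p]))‖ ≤ 1 := by
        have := Padic.norm_int_le_one (p := p) (p.choose (i + 2))
        push_cast at this ⊢
        exact this
      calc ‖a - 1‖ ^ (i + 2) * ‖((p.choose (i + 2) : ℚ_[p]))‖
          ≤ ‖a - 1‖ ^ (i + 2) * 1 :=
            mul_le_mul_of_nonneg_left hch (by positivity)
      _ = ‖a - 1‖ ^ (i + 2) := mul_one _
      _ ≤ ‖a - 1‖ ^ 2 := pow_le_pow_of_le_one (norm_nonneg _) ha1 (by omega)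
      _ = ‖a - 1‖ * ‖a - 1‖ := sq ‖a - 1‖
      _ ≤ ‖1 - q‖ * ‖a - 1‖ := mul_le_mul_of_nonneg_right ha (norm_nonneg _)
      _ ≤ max ‖(p : ℚ_[p])‖ ‖1 - q‖ * ‖a - 1‖ :=
            mul_le_mul_of_nonneg_right (le_max_right _ _) (norm_nonneg _)

lemma tendsto_q_pow_p_pow {q : ℚ_[p]} (hq : ‖1 - q‖ < 1) :
    Tendsto (fun N : ℕ => q ^ (p ^ N)) atTop (nhds 1) := by
  set c : ℝ := max ‖(p : ℚ_[p])‖ ‖1 - q‖ with hc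
  have hc0 : 0 ≤ c := le_trans (norm_nonneg _) (le_max_left _ _)
  have hc1 : c < 1 := by
    apply max_lt _ hq
    rw [Padic.norm_p]
    have hp2 := (Fact.out : p.Prime).two_le
    rw [inv_lt_one_iff₀]
    right
    exact_mod_cast Nat.lt_of_lt_of_le Nat.one_lt_two hp2
  have hbound : ∀ N : ℕ, ‖q ^ (p ^ N) - 1‖ ≤ c ^ N * ‖1 - q‖ := by
    intro N
    induction N with
    | zero => simp [norm_sub_rev]
    | succ N ih =>
      have hle : ‖q ^ (p ^ N) - 1‖ ≤ ‖1 - q‖ := by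
        refine ih.trans ?_
        calc c ^ N * ‖1 - q‖ ≤ 1 * ‖1 - q‖ :=
          mul_le_mul_of_nonneg_right (pow_le_one₀ hc0 hc1.le) (norm_nonneg _)
        _ = ‖1 - q‖ := one_mul _
      have := step_bound hq hle
      rw [← pow_mul, ← pow_succ] at this
      calc ‖q ^ (p ^ (N + 1)) - 1‖ ≤ c * ‖q ^ (p ^ N) - 1‖ := this
      _ ≤ c * (c ^ N * ‖1 - q‖) := mul_le_mul_of_nonneg_left ih hc0
      _ = c ^ (N + 1) * ‖1 - q‖ := by ring
  have h0 : Tendsto (fun N : ℕ => q ^ (p ^ N) - 1) atTop (nhds 0) := by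
    apply squeeze_zero_norm hbound
    simpa using (tendsto_pow_atTop_nhds_zero_of_lt_one hc0 hc1).mul_const ‖1 - q‖
  have := h0.add_const 1
  simpa using this

end Aux
section Integrals

variable {p : ℕ} [Fact p.Prime]

lemma fi_sum {q : ℚ_[p]} {ι : Type*} (s : Finset ι) (f : ι → ℕ → ℚ_[p]) (L : ι → ℚ_[p])
    (h : ∀ i ∈ s, fermionicIntegral p q (f i) (L i)) :
    fermionicIntegral p q (fun x => ∑ i ∈ s, f i x) (∑ i ∈ s, L i) := by
  unfold fermionicIntegral at *
  refine Tendsto.congr (fun N => ?_) (tendsto_finset_sum s h)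
  simp only [Finset.sum_mul]
  rw [Finset.sum_comm, Finset.mul_sum]

lemma fi_const_mul {q : ℚ_[p]} (c : ℚ_[p]) {g : ℕ → ℚ_[p]} {L : ℚ_[p]}
    (h : fermionicIntegral p q g L) :
    fermionicIntegral p q (fun x => c * g x) (c * L) := by
  unfold fermionicIntegral at *
  refine Tendsto.congr (fun N => ?_) (h.const_mul c)
  have hs : ∑ x ∈ Finset.range (p ^ N), (c * g x) * (-q) ^ x
      = c * ∑ x ∈ Finset.range (p ^ N), g x * (-q) ^ x := by
    rw [Finset.mul_sum]
    exact Finset.sum_congr rfl (fun x _ => by ring)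
  rw [hs]
  ring

lemma fi_pow (hp : Odd p) {q : ℚ_[p]} (hq : ‖1 - q‖ < 1) (c : ℕ) :
    fermionicIntegral p q (fun x => (q ^ c) ^ x) ((1 + q) / (1 + q ^ (c + 1))) := by
  have hqc : 1 + q ^ (c + 1) ≠ 0 := one_add_pow_ne_zero hp hq (c + 1)
  have hne1 : -(q ^ (c + 1)) ≠ 1 := by
    intro h
    apply hqc
    rw [← h]; ring
  have key : ∀ N : ℕ,
      ((1 + q) / (1 - (-q) ^ (p ^ N))) * ∑ x ∈ Finset.range (p ^ N), (q ^ c) ^ x * (-q) ^ x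
        = (1 + q) * (1 + (q ^ (p ^ N)) ^ (c + 1)) / ((1 + q ^ (p ^ N)) * (1 + q ^ (c + 1))) := by
    intro N
    have hoddN : Odd (p ^ N) := hp.pow
    have hterm : ∀ x : ℕ, (q ^ c) ^ x * (-q) ^ x = (-(q ^ (c + 1))) ^ x := by
      intro x
      rw [← mul_pow]
      congr 1
      ring
    rw [Finset.sum_congr rfl (fun x _ => hterm x), geom_sum_eq hne1]
    rw [hoddN.neg_pow, hoddN.neg_pow, ← pow_mul, mul_comm (c+1), pow_mul]
    have hpn : 1 + q ^ (p ^ N) ≠ 0 := one_add_pow_ne_zero hp hq (p ^ N)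
    set u := q ^ (p ^ N) with hu
    set v := q ^ (c + 1) with hv
    have h1 : 1 - -u ≠ 0 := by
      intro h; apply hpn; rw [← h]; ring
    have h2 : -v - 1 ≠ 0 := by
      intro h; apply hqc; rw [show (0:ℚ_[p]) = -(-v-1) by rw [h]; ring]; ring
    field_simp
    ring
  refine Tendsto.congr (fun N => (key N).symm) ?_
  have hu : Tendsto (fun N : ℕ => q ^ (p ^ N)) atTop (nhds 1) := tendsto_q_pow_p_pow hq
  have hnum : Tendsto (fun N : ℕ => (1 + q) * (1 + (q ^ (p ^ N)) ^ (c + 1))) atTop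
      (nhds ((1 + q) * (1 + 1))) := by
    have h1 : Tendsto (fun N : ℕ => (q ^ (p ^ N)) ^ (c + 1)) atTop (nhds 1) := by
      simpa using hu.pow (c + 1)
    exact tendsto_const_nhds.mul (tendsto_const_nhds.add h1)
  have hden : Tendsto (fun N : ℕ => (1 + q ^ (p ^ N)) * (1 + q ^ (c + 1))) atTop
      (nhds ((1 + 1) * (1 + q ^ (c + 1)))) :=
    (tendsto_const_nhds.add hu).mul tendsto_const_nhds
  have h11 : (1 + 1 : ℚ_[p]) ≠ 0 := by
    intro h; exact two_ne_zero (α := ℚ_[p]) (by rw [← h]; norm_num)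
  have h2ne : (1 + 1 : ℚ_[p]) * (1 + q ^ (c + 1)) ≠ 0 := mul_ne_zero h11 hqc
  have hfin : Tendsto (fun N : ℕ => (1 + q) * (1 + (q ^ (p ^ N)) ^ (c + 1)) /
      ((1 + q ^ (p ^ N)) * (1 + q ^ (c + 1)))) atTop
      (nhds ((1 + q) * (1 + 1) / ((1 + 1) * (1 + q ^ (c + 1))))) := hnum.div hden h2ne
  convert hfin using 2
  rw [mul_comm (1 + 1 : ℚ_[p]), mul_div_mul_right _ _ h11]

end Integrals
section XiLemma

variable {p : ℕ} [Fact p.Prime]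

lemma F_eval {q : ℚ_[p]} (hq0 : q ≠ 0) (x : ℕ) :
    qnum q⁻¹ (1 - (x : ℤ)) = (1 - q⁻¹ * q ^ x) / (1 - q⁻¹) := by
  unfold qnum
  congr 2
  rw [sub_eq_add_neg, zpow_add₀ (inv_ne_zero hq0), zpow_one, zpow_neg, inv_zpow, inv_inv,
    zpow_natCast]

lemma norm_inv_sub {q : ℚ_[p]} (hq : ‖1 - q‖ < 1) : ‖1 - q⁻¹‖ < 1 := by
  have hq0 : q ≠ 0 := by
    intro h
    rw [h] at hq
    simp at hq
  have h : 1 - q⁻¹ = (q - 1) * q⁻¹ := by field_simp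
  rw [h, norm_mul, norm_inv, norm_q_one hq, inv_one, mul_one, norm_sub_rev]
  exact hq

lemma fi_F_pow (hp : Odd p) {q : ℚ_[p]} (hq : ‖1 - q‖ < 1) (hq1 : q ≠ 1) (j : ℕ) :
    fermionicIntegral p q (fun x : ℕ => (qnum q⁻¹ (1 - (x : ℤ))) ^ j) (xi q⁻¹ j 2) := by
  have hq0 : q ≠ 0 := by
    intro h; rw [h] at hq; simp at hq
  have hqinv : ‖1 - q⁻¹‖ < 1 := norm_inv_sub hq
  have hD : 1 - q⁻¹ ≠ 0 := by
    intro h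
    have : q⁻¹ = 1 := by linear_combination -h
    exact hq1 (by rw [← inv_inv q, this, inv_one])
  set c : ℕ → ℚ_[p] := fun i =>
    (j.choose i : ℚ_[p]) * (-1) ^ i * q⁻¹ ^ i / (1 - q⁻¹) ^ j with hc
  have hpt : ∀ x : ℕ, (qnum q⁻¹ (1 - (x : ℤ))) ^ j
      = ∑ i ∈ Finset.range (j + 1), c i * (q ^ i) ^ x := by
    intro x
    rw [F_eval hq0 x, div_pow]
    have hbin := add_pow (-(q⁻¹ * q ^ x)) 1 j
    simp only [one_pow, mul_one] at hbin
    rw [show (1 : ℚ_[p]) - q⁻¹ * q ^ x = -(q⁻¹ * q ^ x) + 1 by ring, hbin, Finset.sum_div]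
    refine Finset.sum_congr rfl fun i _ => ?_
    have hxi : (q ^ x) ^ i = (q ^ i) ^ x := by
      rw [← pow_mul, mul_comm, pow_mul]
    rw [neg_pow, mul_pow, hxi, hc]
    ring
  have hval : xi q⁻¹ j 2 = ∑ i ∈ Finset.range (j + 1), c i * ((1 + q) / (1 + q ^ (i + 1))) := by
    unfold xi
    rw [Finset.mul_sum]
    refine Finset.sum_congr rfl fun i _ => ?_
    have hz : (q⁻¹ : ℚ_[p]) ^ ((i : ℤ) * 2) = q⁻¹ ^ (2 * i) := by
      rw [show (i : ℤ) * 2 = ((2 * i : ℕ) : ℤ) by push_cast; ring, zpow_natCast]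
    rw [hz, hc]
    have h1 : 1 + (q⁻¹ : ℚ_[p]) ^ (i + 1) ≠ 0 := one_add_pow_ne_zero hp hqinv (i + 1)
    have h2 : 1 + q ^ (i + 1) ≠ 0 := one_add_pow_ne_zero hp hq (i + 1)
    have key2 : (1 + q⁻¹) * q⁻¹ ^ (2 * i) / (1 + q⁻¹ ^ (i + 1))
        = q⁻¹ ^ i * (1 + q) / (1 + q ^ (i + 1)) := by
      rw [div_eq_div_iff h1 h2, inv_pow, inv_pow, inv_pow]
      field_simp
      ring
    calc (1 + q⁻¹) / (1 - q⁻¹) ^ j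
          * ((j.choose i : ℚ_[p]) * (-1) ^ i * q⁻¹ ^ (2 * i) / (1 + q⁻¹ ^ (i + 1)))
        = ((1 + q⁻¹) * q⁻¹ ^ (2 * i) / (1 + q⁻¹ ^ (i + 1)))
            * ((j.choose i : ℚ_[p]) * (-1) ^ i / (1 - q⁻¹) ^ j) := by ring
      _ = (q⁻¹ ^ i * (1 + q) / (1 + q ^ (i + 1)))
            * ((j.choose i : ℚ_[p]) * (-1) ^ i / (1 - q⁻¹) ^ j) := by rw [key2]
      _ = (j.choose i : ℚ_[p]) * (-1) ^ i * q⁻¹ ^ i / (1 - q⁻¹) ^ j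
            * ((1 + q) / (1 + q ^ (i + 1))) := by ring
  have hfi := fi_sum (q := q) (Finset.range (j + 1)) (fun i x => c i * (q ^ i) ^ x)
    (fun i => c i * ((1 + q) / (1 + q ^ (i + 1))))
    (fun i _ => fi_const_mul (c i) (fi_pow hp hq i))
  rw [show (fun x : ℕ => (qnum q⁻¹ (1 - (x : ℤ))) ^ j)
      = fun x : ℕ => ∑ i ∈ Finset.range (j + 1), c i * (q ^ i) ^ x from funext hpt, hval]
  exact hfi

end XiLemma
theorem stmt14 (p : ℕ) [Fact p.Prime] (hp : Odd p) (q : ℚ_[p]) (hq : ‖1 - q‖ < 1) (hq1 : q ≠ 1) (m n k : ℕ) (hkn : k ≤ n) (hkm : k ≤ m) :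
    fermionicIntegral p q (fun x => bern q k n x * bern q k m x)
      ((n.choose k : ℚ_[p]) * (m.choose k : ℚ_[p]) *
        ∑ l ∈ Finset.range (2 * k + 1),
          ((2 * k).choose l : ℚ_[p]) * (-1) ^ (l + 2 * k) * xi q⁻¹ (n + m - l) 2) := by
  have hq0 : q ≠ 0 := by
    intro h; rw [h] at hq; simp at hq
  have h1q : (1 : ℚ_[p]) - q ≠ 0 := by
    intro h
    exact hq1 (by linear_combination -h)
  have hD : (1 : ℚ_[p]) - q⁻¹ ≠ 0 := by
    intro h
    have : q⁻¹ = 1 := by linear_combination -h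
    exact hq1 (by rw [← inv_inv q, this, inv_one])
  set coeff : ℕ → ℚ_[p] := fun l =>
    (n.choose k : ℚ_[p]) * (m.choose k : ℚ_[p]) * ((2 * k).choose l : ℚ_[p]) * (-1) ^ (l + 2 * k)
    with hcoeff
  -- pointwise expansion of the integrand
  have hAF : ∀ x : ℕ, qnum q (x : ℤ) = 1 - qnum q⁻¹ (1 - (x : ℤ)) := by
    intro x
    have hq1' : q - 1 ≠ 0 := sub_ne_zero.mpr hq1
    have hstep : (1 - q⁻¹ * q ^ x) / (1 - q⁻¹) = (q - q ^ x) / (q - 1) := by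
      rw [div_eq_div_iff hD hq1']
      field_simp
    rw [F_eval hq0 x, hstep]
    unfold qnum
    rw [zpow_natCast, eq_sub_iff_add_eq, div_add_div _ _ h1q hq1',
      div_eq_one_iff_eq (mul_ne_zero h1q hq1')]
    ring
  have hpt : ∀ x : ℕ, bern q k n x * bern q k m x
      = ∑ l ∈ Finset.range (2 * k + 1), coeff l * (qnum q⁻¹ (1 - (x : ℤ))) ^ (n + m - l) := by
    intro x
    set F := qnum q⁻¹ (1 - (x : ℤ)) with hF
    have h1 : bern q k n x * bern q k m x
        = ((n.choose k : ℚ_[p]) * (m.choose k : ℚ_[p]))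
            * ((1 - F) ^ (2 * k) * F ^ ((n - k) + (m - k))) := by
      unfold bern
      rw [hAF x, ← hF, pow_add, show 2 * k = k + k by ring, pow_add]
      ring
    have h2 : (1 - F) ^ (2 * k)
        = ∑ l ∈ Finset.range (2 * k + 1), (-F) ^ (2 * k - l) * (((2 * k).choose l : ℚ_[p])) := by
      have hb := add_pow (1 : ℚ_[p]) (-F) (2 * k)
      simp only [one_pow, one_mul] at hb
      rw [show (1 : ℚ_[p]) - F = 1 + -F by ring, hb]
    rw [h1, h2, Finset.sum_mul, Finset.mul_sum]
    refine Finset.sum_congr rfl fun l hl => ?_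
    have hl2k : l ≤ 2 * k := by
      simpa [Nat.lt_succ_iff] using hl
    rw [neg_pow]
    have e1 : (-1 : ℚ_[p]) ^ (2 * k - l) = (-1) ^ (l + 2 * k) := by
      rw [show l + 2 * k = (2 * k - l) + 2 * l by omega, pow_add, pow_mul, neg_one_sq, one_pow,
        mul_one]
    rw [e1, show n + m - l = (2 * k - l) + ((n - k) + (m - k)) by omega, pow_add, hcoeff]
    ring
  have hval : (n.choose k : ℚ_[p]) * (m.choose k : ℚ_[p]) *
        ∑ l ∈ Finset.range (2 * k + 1),
          ((2 * k).choose l : ℚ_[p]) * (-1) ^ (l + 2 * k) * xi q⁻¹ (n + m - l) 2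
      = ∑ l ∈ Finset.range (2 * k + 1), coeff l * xi q⁻¹ (n + m - l) 2 := by
    rw [Finset.mul_sum]
    exact Finset.sum_congr rfl fun l _ => by rw [hcoeff]; ring
  rw [show (fun x : ℕ => bern q k n x * bern q k m x)
      = fun x : ℕ => ∑ l ∈ Finset.range (2 * k + 1), coeff l * (qnum q⁻¹ (1 - (x : ℤ))) ^ (n + m - l)
      from funext hpt, hval]
  exact fi_sum (Finset.range (2 * k + 1))
    (fun l x => coeff l * (qnum q⁻¹ (1 - (x : ℤ))) ^ (n + m - l))
    (fun l => coeff l * xi q⁻¹ (n + m - l) 2)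
    (fun l _ => fi_const_mul (coeff l) (fi_F_pow hp hq hq1 (n + m - l)))
end

section
/- (Theorem 8, second part) For all m, n ∈ ℕ with m + n ≥ 1, Σ_{l=0}^{m+n} C(n+m,l)·(−1)^l·ξ_{l,q} = q²·ξ_{n+m,1/q} + [2]_q, where ξ_{j,1/q} denotes the q-Euler number with parameter 1/q in place of q. -/
open Finset Filter

/- ### Auxiliary lemmas -/

lemma aux_qnorm {p : ℕ} [Fact p.Prime] {q : ℚ_[p]} (hq : ‖1 - q‖ < 1) : ‖q‖ = 1 := by
  have h : q = 1 + -(1 - q) := by ring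
  rw [h, Padic.add_eq_max_of_ne]
  · rw [norm_neg, norm_one]
    exact max_eq_left hq.le
  · rw [norm_neg, norm_one]
    exact fun h' => absurd h'.symm (ne_of_lt hq)

lemma aux_pow_sub_one {p : ℕ} [Fact p.Prime] {q : ℚ_[p]} (hq : ‖1 - q‖ < 1) (k : ℕ) :
    ‖q ^ k - 1‖ < 1 := by
  induction k with
  | zero => simpa using lt_of_le_of_lt (norm_nonneg (1 - q)) hq
  | succ k ih =>
    have h : q ^ (k + 1) - 1 = q ^ k * (q - 1) + (q ^ k - 1) := by ring
    rw [h]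
    calc ‖q ^ k * (q - 1) + (q ^ k - 1)‖ ≤ max ‖q ^ k * (q - 1)‖ ‖q ^ k - 1‖ :=
          Padic.nonarchimedean _ _
      _ < 1 := by
          apply max_lt _ ih
          rw [norm_mul, norm_pow, aux_qnorm hq, one_pow, one_mul, ← norm_neg]
          simpa using hq

lemma aux_den {p : ℕ} [Fact p.Prime] (hp : Odd p) {q : ℚ_[p]} (hq : ‖1 - q‖ < 1) (k : ℕ) :
    1 + q ^ (k + 1) ≠ 0 := by
  intro h
  have h2 : ‖(2 : ℚ_[p])‖ = 1 := by
    have hle : ‖((2 : ℤ) : ℚ_[p])‖ ≤ 1 := Padic.norm_int_le_one 2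
    have hnd : ¬ ((p : ℤ) ∣ (2 : ℤ)) := by
      intro hdvd
      have hpd : p ∣ 2 := Int.natCast_dvd_natCast.mp (by exact_mod_cast hdvd)
      have hp2 : p ≤ 2 := Nat.le_of_dvd (by norm_num) hpd
      have := (Fact.out : p.Prime).two_le
      have hodd := Nat.odd_iff.mp hp
      omega
    have hlt := (Padic.norm_intCast_lt_one_iff (k := (2 : ℤ))).not.mpr hnd
    push_cast at hle hlt ⊢
    exact le_antisymm hle (not_lt.mp hlt)
  have he : q ^ (k + 1) - 1 = -2 := by linear_combination h
  have := aux_pow_sub_one hq (k + 1)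
  rw [he, norm_neg, h2] at this
  exact lt_irrefl 1 this

lemma xi_zero_eq {p : ℕ} [Fact p.Prime] (q : ℚ_[p]) (l : ℕ) :
    xi q l 0 = ∑ j ∈ Finset.range (l + 1),
      (1 + q) * (l.choose j : ℚ_[p]) * (-1) ^ j * ((1 - q)⁻¹) ^ l * (1 + q ^ (j + 1))⁻¹ := by
  rw [xi, Finset.mul_sum]
  refine Finset.sum_congr rfl fun j _ => ?_
  rw [mul_zero, zpow_zero, div_eq_mul_inv, div_eq_mul_inv, inv_pow]
  ring

lemma aux_sign {p : ℕ} [Fact p.Prime] (a b : ℕ) :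
    ((-1 : ℚ_[p])) ^ (a + b) * (-1) ^ a = (-1) ^ b := by
  rw [pow_add]
  calc (-1 : ℚ_[p]) ^ a * (-1) ^ b * (-1) ^ a
      = ((-1 : ℚ_[p]) * (-1)) ^ a * (-1) ^ b := by rw [mul_pow]; ring
    _ = (-1) ^ b := by norm_num

lemma main_alg {p : ℕ} [Fact p.Prime] (q : ℚ_[p]) (hq0 : q ≠ 0) (hq1 : 1 - q ≠ 0)
    (hden : ∀ k : ℕ, 1 + q ^ (k + 1) ≠ 0) (N : ℕ) (hN : 1 ≤ N) :
    ∑ l ∈ Finset.range (N + 1), (N.choose l : ℚ_[p]) * (-1) ^ l * xi q l 0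
      = q ^ 2 * xi q⁻¹ N 0 + (1 + q) := by
  set u : ℚ_[p] := (1 - q)⁻¹ with hu
  have hu1 : (1 - q) * u = 1 := mul_inv_cancel₀ hq1
  set S : ℕ → ℚ_[p] := fun j => (1 + q ^ (j + 1))⁻¹ with hS
  have hSmul : ∀ j, (1 + q ^ (j + 1)) * S j = 1 := fun j => mul_inv_cancel₀ (hden j)
  -- Step B : the left side as a single sum
  have stepB : ∑ l ∈ Finset.range (N + 1), (N.choose l : ℚ_[p]) * (-1) ^ l * xi q l 0
      = ∑ j ∈ Finset.range (N + 1),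
          (1 + q) * (N.choose j : ℚ_[p]) * (-q) ^ (N - j) * u ^ N * S j := by
    have e1 : ∀ l ∈ Finset.range (N + 1), (N.choose l : ℚ_[p]) * (-1) ^ l * xi q l 0
        = ∑ j ∈ Finset.range (N + 1),
            (1 + q) * (N.choose l : ℚ_[p]) * (l.choose j : ℚ_[p]) *
              ((-1) ^ l * (-1) ^ j) * u ^ l * S j := by
      intro l hl
      rw [xi_zero_eq, Finset.mul_sum]
      refine (Finset.sum_subset (Finset.range_subset_range.mpr
          (by simp only [Finset.mem_range] at hl; omega)) ?_).trans
        (Finset.sum_congr rfl fun j _ => by rw [hS]; ring)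
      intro j hj hj'
      have : l < j := by simp only [Finset.mem_range] at hj hj'; omega
      simp [Nat.choose_eq_zero_of_lt this]
    rw [Finset.sum_congr rfl e1, Finset.sum_comm]
    refine Finset.sum_congr rfl fun j hj => ?_
    have hjN : j ≤ N := by simpa [Nat.lt_succ_iff] using hj
    -- drop vanishing terms l < j
    have hsub : Finset.Ico j (N + 1) ⊆ Finset.range (N + 1) := by
      intro x hx
      simp only [Finset.mem_Ico] at hx
      simp only [Finset.mem_range]
      omega
    have hzero : ∀ l ∈ Finset.range (N + 1), l ∉ Finset.Ico j (N + 1) →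
        (1 + q) * (N.choose l : ℚ_[p]) * (l.choose j : ℚ_[p]) *
          ((-1) ^ l * (-1) ^ j) * u ^ l * S j = 0 := by
      intro l hl hl'
      have : l < j := by
        simp only [Finset.mem_range] at hl
        simp only [Finset.mem_Ico, not_and, not_lt] at hl'
        omega
      simp [Nat.choose_eq_zero_of_lt this]
    rw [← Finset.sum_subset hsub hzero]
    rw [Finset.sum_Ico_eq_sum_range]
    rw [show N + 1 - j = (N - j) + 1 from by omega]
    have key : ∀ k ∈ Finset.range ((N - j) + 1),
        (1 + q) * (N.choose (j + k) : ℚ_[p]) * ((j + k).choose j : ℚ_[p]) *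
            ((-1) ^ (j + k) * (-1) ^ j) * u ^ (j + k) * S j
          = ((1 + q) * (N.choose j : ℚ_[p]) * u ^ j * S j) *
              ((-u) ^ k * 1 ^ ((N - j) - k) * ((N - j).choose k : ℚ_[p])) := by
      intro k hk
      have hkNj : k ≤ N - j := by simpa [Nat.lt_succ_iff] using hk
      have hch : N.choose (j + k) * (j + k).choose j = N.choose j * (N - j).choose k := by
        have := Nat.choose_mul (n := N) (k := j + k) (s := j) (by omega)
        simpa using this
      have hchq : (N.choose (j + k) : ℚ_[p]) * ((j + k).choose j : ℚ_[p])
          = (N.choose j : ℚ_[p]) * ((N - j).choose k : ℚ_[p]) := by exact_mod_cast hch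
      rw [aux_sign, pow_add]
      calc (1 + q) * (N.choose (j + k) : ℚ_[p]) * ((j + k).choose j : ℚ_[p]) *
            (-1) ^ k * (u ^ j * u ^ k) * S j
          = ((N.choose (j + k) : ℚ_[p]) * ((j + k).choose j : ℚ_[p])) *
              ((1 + q) * (-1) ^ k * (u ^ j * u ^ k) * S j) := by ring
        _ = ((N.choose j : ℚ_[p]) * ((N - j).choose k : ℚ_[p])) *
              ((1 + q) * (-1) ^ k * (u ^ j * u ^ k) * S j) := by rw [hchq]
        _ = ((1 + q) * (N.choose j : ℚ_[p]) * u ^ j * S j) *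
              ((-u) ^ k * 1 ^ ((N - j) - k) * ((N - j).choose k : ℚ_[p])) := by
            rw [neg_pow, one_pow]; ring
    rw [Finset.sum_congr rfl key, ← Finset.mul_sum, ← add_pow]
    have h1u : -u + 1 = (-q) * u := by linear_combination (-1 : ℚ_[p]) * hu1
    rw [h1u, mul_pow]
    have hupow : u ^ j * u ^ (N - j) = u ^ N := by rw [← pow_add]; congr 1; omega
    linear_combination ((1 + q) * (N.choose j : ℚ_[p]) * (-q) ^ (N - j) * S j) * hupow
  -- Step C : the right side as a single sum
  have stepC : q ^ 2 * xi q⁻¹ N 0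
      = ∑ j ∈ Finset.range (N + 1),
          (1 + q) * (N.choose j : ℚ_[p]) * (-q) ^ (N - j) * q ^ (2 * j + 2) * u ^ N * S j := by
    rw [xi_zero_eq, Finset.mul_sum]
    refine Finset.sum_congr rfl fun j hj => ?_
    have hjN : j ≤ N := by simpa [Nat.lt_succ_iff] using hj
    have e2 : (1 - q⁻¹)⁻¹ = -(q * u) := by
      refine inv_eq_of_mul_eq_one_right ?_
      have h' : (1 - q⁻¹) * (-(q * u)) = (1 - q) * u := by
        field_simp
        ring
      rw [h', hu1]
    have e3 : (1 + q⁻¹ ^ (j + 1))⁻¹ = q ^ (j + 1) * S j := by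
      refine inv_eq_of_mul_eq_one_right ?_
      have hpow : (1 + q⁻¹ ^ (j + 1)) * q ^ (j + 1) = 1 + q ^ (j + 1) := by
        rw [inv_pow]
        field_simp
        ring
      calc (1 + q⁻¹ ^ (j + 1)) * (q ^ (j + 1) * S j)
          = ((1 + q⁻¹ ^ (j + 1)) * q ^ (j + 1)) * S j := by ring
        _ = (1 + q ^ (j + 1)) * S j := by rw [hpow]
        _ = 1 := hSmul j
    have e4 : 1 + q⁻¹ = (1 + q) * q⁻¹ := by
      rw [add_mul, one_mul, mul_inv_cancel₀ hq0, add_comm]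
    rw [e2, e3, e4]
    have hq2 : q ^ 2 * q⁻¹ = q := by
      rw [sq, mul_assoc, mul_inv_cancel₀ hq0, mul_one]
    have hkey : ((-1 : ℚ_[p])) ^ j * (-(q * u)) ^ N = q ^ j * (-q) ^ (N - j) * u ^ N := by
      obtain ⟨d, hd⟩ : ∃ d, N = j + d := ⟨N - j, by omega⟩
      subst hd
      rw [show j + d - j = d from by omega]
      calc ((-1 : ℚ_[p])) ^ j * (-(q * u)) ^ (j + d)
          = ((-1) ^ j * (-q) ^ j) * ((-q) ^ d * u ^ (j + d)) := by
            rw [show (-(q * u) : ℚ_[p]) = (-q) * u from by ring, mul_pow, pow_add]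
            ring
        _ = ((-1) * (-q)) ^ j * ((-q) ^ d * u ^ (j + d)) := by rw [mul_pow]
        _ = q ^ j * (-q) ^ d * u ^ (j + d) := by
            rw [show ((-1 : ℚ_[p])) * (-q) = q from by ring, mul_assoc]
    calc q ^ 2 * ((1 + q) * q⁻¹ * (N.choose j : ℚ_[p]) * (-1) ^ j *
            (-(q * u)) ^ N * (q ^ (j + 1) * S j))
        = (q ^ 2 * q⁻¹) * ((1 + q) * (N.choose j : ℚ_[p]) * q ^ (j + 1) * S j) *
            ((-1) ^ j * (-(q * u)) ^ N) := by ring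
      _ = (q ^ 2 * q⁻¹) * ((1 + q) * (N.choose j : ℚ_[p]) * q ^ (j + 1) * S j) *
            (q ^ j * (-q) ^ (N - j) * u ^ N) := by rw [hkey]
      _ = (1 + q) * (N.choose j : ℚ_[p]) * (-q) ^ (N - j) * q ^ (2 * j + 2) * u ^ N * S j := by
          rw [hq2, show 2 * j + 2 = (j + 1) + j + 1 from by omega, pow_add, pow_add, pow_one]
          ring
  -- Step D : combine
  rw [stepB, stepC]
  have hterm : ∀ j ∈ Finset.range (N + 1),
      (1 + q) * (N.choose j : ℚ_[p]) * (-q) ^ (N - j) * u ^ N * S j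
        - (1 + q) * (N.choose j : ℚ_[p]) * (-q) ^ (N - j) * q ^ (2 * j + 2) * u ^ N * S j
      = ((1 + q) * u ^ N) *
          ((N.choose j : ℚ_[p]) * (-q) ^ (N - j) * (1 - q ^ (j + 1))) := by
    intro j _
    linear_combination ((1 + q) * (N.choose j : ℚ_[p]) * (-q) ^ (N - j) * u ^ N *
      (1 - q ^ (j + 1))) * hSmul j
  have hbin : ∑ j ∈ Finset.range (N + 1),
      (N.choose j : ℚ_[p]) * (-q) ^ (N - j) * (1 - q ^ (j + 1)) = (1 - q) ^ N := by
    calc ∑ j ∈ Finset.range (N + 1), (N.choose j : ℚ_[p]) * (-q) ^ (N - j) * (1 - q ^ (j + 1))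
        = ∑ j ∈ Finset.range (N + 1), ((1 : ℚ_[p]) ^ j * (-q) ^ (N - j) * (N.choose j : ℚ_[p])
            - q * (q ^ j * (-q) ^ (N - j) * (N.choose j : ℚ_[p]))) :=
          Finset.sum_congr rfl fun j _ => by ring
      _ = (1 + -q) ^ N - q * (q + -q) ^ N := by
          rw [Finset.sum_sub_distrib, ← Finset.mul_sum, ← add_pow, ← add_pow]
      _ = (1 - q) ^ N := by
          rw [show q + -q = (0 : ℚ_[p]) from by ring, zero_pow (by omega : N ≠ 0),
            mul_zero, sub_zero, show (1 : ℚ_[p]) + -q = 1 - q from by ring]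
  have hsum : ∑ j ∈ Finset.range (N + 1),
      ((1 + q) * (N.choose j : ℚ_[p]) * (-q) ^ (N - j) * u ^ N * S j
        - (1 + q) * (N.choose j : ℚ_[p]) * (-q) ^ (N - j) * q ^ (2 * j + 2) * u ^ N * S j)
      = 1 + q := by
    rw [Finset.sum_congr rfl hterm, ← Finset.mul_sum, hbin, mul_assoc, ← mul_pow,
      show u * (1 - q) = 1 from by rw [mul_comm]; exact hu1, one_pow, mul_one]
  rw [Finset.sum_sub_distrib] at hsum
  linear_combination hsum

theorem stmt17 (p : ℕ) [Fact p.Prime] (hp : Odd p) (q : ℚ_[p]) (hq : ‖1 - q‖ < 1) (hq1 : q ≠ 1) (m n : ℕ) (hmn : 1 ≤ m + n) :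
    ∑ l ∈ Finset.range (m + n + 1), ((n + m).choose l : ℚ_[p]) * (-1) ^ l * xi q l 0
      = q ^ 2 * xi q⁻¹ (n + m) 0 + (1 + q) := by
  have hq1' : (1 : ℚ_[p]) - q ≠ 0 := fun h => hq1 (by linear_combination -h)
  have hq0 : q ≠ 0 := by
    intro h
    rw [h, sub_zero, norm_one] at hq
    exact lt_irrefl 1 hq
  have h := main_alg q hq0 hq1' (fun k => aux_den hp hq k) (n + m) (by omega)
  rw [show m + n = n + m from Nat.add_comm m n]
  exact h
end

section
/- (Theorem 9, second part) Let s ≥ 1 and let n₁, …, n_s ∈ ℕ with N := n₁ + ⋯ + n_s ≥ 1. Then Σ_{l=0}^{N} C(N,l)·(−1)^l·ξ_{l,q} = [2]_q + q²·ξ_{N,1/q}, where ξ_{N,1/q} denotes the q-Euler number with parameter 1/q in place of q (the factor q², omitted in the paper's displayed formula, is required for the identity to hold, consistently with Theorem 8). -/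
open Finset Filter

/-- Step A: swapping the double sum in `Σ C(N,l)(-1)^l ξ_{l,q}`. -/
lemma aux_stepA {K : Type*} [Field K] (q : K) (h1q : (1:K) - q ≠ 0)
    (hD : ∀ m : ℕ, (1:K) + q ^ (m + 1) ≠ 0) (N : ℕ) :
    ∑ l ∈ range (N + 1), (N.choose l : K) * (-1) ^ l *
        ((1 + q) / (1 - q) ^ l *
          ∑ j ∈ range (l + 1), (l.choose j : K) * (-1) ^ j / (1 + q ^ (j + 1)))
    = ∑ j ∈ range (N + 1),
        (1 + q) * (N.choose j : K) * (-q) ^ (N - j) / ((1 - q) ^ N * (1 + q ^ (j + 1))) := by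
  have step1 : ∀ l ∈ range (N+1),
      (N.choose l : K) * (-1) ^ l *
        ((1 + q) / (1 - q) ^ l *
          ∑ j ∈ range (l + 1), (l.choose j : K) * (-1) ^ j / (1 + q ^ (j + 1)))
      = ∑ j ∈ range (l + 1), (N.choose l : K) * (l.choose j : K) * ((-1)^l * (-1)^j) *
          (1 + q) / ((1 - q) ^ l * (1 + q ^ (j + 1))) := by
    intro l _
    rw [Finset.mul_sum, Finset.mul_sum]
    refine Finset.sum_congr rfl fun j _ => ?_
    have h1 : ((1:K) - q)^l ≠ 0 := pow_ne_zero _ h1q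
    have h2 := hD j
    field_simp
  rw [Finset.sum_congr rfl step1]
  simp only [Finset.range_eq_Ico]
  rw [
    ← Finset.sum_Ico_Ico_comm 0 (N+1) (fun j l => (N.choose l : K) * (l.choose j : K) *
        ((-1)^l * (-1)^j) * (1 + q) / ((1 - q) ^ l * (1 + q ^ (j + 1))))]
  refine Finset.sum_congr rfl fun j hj => ?_
  have hjN : j ≤ N := by simp [Finset.mem_Ico] at hj; omega
  rw [Finset.sum_Ico_eq_sum_range, show N + 1 - j = (N - j) + 1 by omega]
  have hD' := hD j
  have h1l : ∀ l : ℕ, ((1:K) - q)^l ≠ 0 := fun l => pow_ne_zero _ h1q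
  have key : ∀ m ∈ range ((N - j) + 1),
      (N.choose (j+m) : K) * ((j+m).choose j : K) * ((-1)^(j+m) * (-1)^j) *
          (1 + q) / ((1 - q) ^ (j+m) * (1 + q ^ (j + 1)))
      = ((N.choose j : K) * (1 + q) / ((1 - q)^j * (1 + q ^ (j + 1)))) *
          ((-(1-q)⁻¹) ^ m * ((N - j).choose m : K)) := by
    intro m hm
    have hmk : m ≤ N - j := by simp [Finset.mem_range] at hm; omega
    have hc : (N.choose (j+m) : K) * ((j+m).choose j : K)
        = (N.choose j : K) * ((N - j).choose m : K) := by
      have := Nat.choose_mul (n := N) (k := j + m) (s := j) (by omega)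
      have h2 : j + m - j = m := by omega
      rw [h2] at this
      exact_mod_cast congrArg (Nat.cast : ℕ → K) this
    have hsgn : ((-1:K))^(j+m) * (-1)^j = (-1)^m := by
      rw [pow_add, mul_assoc, mul_comm ((-1:K)^m), ← mul_assoc, ← pow_add,
        Even.neg_one_pow ⟨j, rfl⟩, one_mul]
    rw [hc, hsgn, pow_add, neg_pow ((1-q)⁻¹), inv_pow]
    field_simp
  rw [Finset.sum_congr rfl key, ← Finset.mul_sum]
  have hbin : ∑ m ∈ range ((N-j)+1), (-(1-q)⁻¹)^m * ((N - j).choose m : K)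
      = (-(1-q)⁻¹ + 1)^(N-j) := by
    simpa using (add_pow (-(1-q)⁻¹) 1 (N-j)).symm
  have hx : -(1-q:K)⁻¹ + 1 = (-q)/(1-q) := by field_simp; ring
  have hNs : ((1:K)-q)^N = (1-q)^j * (1-q)^(N-j) := by rw [← pow_add]; congr 1; omega
  rw [hbin, hx, div_pow, hNs]
  field_simp

/-- Termwise identity comparing the swapped sum with `q² ξ_{N,1/q}`. -/
lemma aux_hterm {K : Type*} [Field K] (q : K) (hq0 : q ≠ 0) (hq1 : q ≠ 1)
    (N : ℕ) (j : ℕ) (hjN : j ≤ N) (hD' : (1:K) + q ^ (j + 1) ≠ 0) :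
      (1 + q) * (N.choose j : K) * (-q) ^ (N - j) / ((1 - q) ^ N * (1 + q ^ (j + 1)))
      - q ^ 2 * ((1 + q⁻¹) / (1 - q⁻¹) ^ N * ((N.choose j : K) * (-1) ^ j / (1 + q⁻¹ ^ (j + 1))))
      = (1 + q) / (q - 1) ^ N *
          ((-1)^j * q^(N-j) * (N.choose j : K) - (-1)^j * (N.choose j : K) * q^(N+1)) := by
  have h1q : (1:K) - q ≠ 0 := sub_ne_zero.mpr fun h => hq1 h.symm
  have hq1' : q - 1 ≠ 0 := sub_ne_zero.mpr hq1
  have hqp : (q:K)^(j+1) ≠ 0 := pow_ne_zero _ hq0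
  obtain ⟨k, hk⟩ : ∃ k, N = j + k := ⟨N - j, by omega⟩
  have hNj : N - j = k := by omega
  have hiq1 : (1:K) - q⁻¹ = (q - 1)/q := by field_simp
  have hiq2 : (1:K) + q⁻¹ = (q + 1)/q := by field_simp
  have hiq3 : (1:K) + q⁻¹^(j+1) = (1 + q^(j+1))/q^(j+1) := by
    rw [inv_pow]; field_simp; ring
  have hd1 : ((q:K)-1)^(j+k) ≠ 0 := pow_ne_zero _ hq1'
  have hd2 : ((1:K)-q)^(j+k) ≠ 0 := pow_ne_zero _ h1q
  set c : K := (N.choose j : K) with hc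
  rw [hNj, hiq1, hiq2, hiq3, hk]
  have hA : (1 + q) * c * (-q) ^ k / ((1 - q) ^ (j+k) * (1 + q ^ (j + 1)))
      = (1 + q) * c * ((-1)^j * q^k) / ((q - 1) ^ (j+k) * (1 + q ^ (j + 1))) := by
    rw [div_eq_div_iff (mul_ne_zero hd2 hD') (mul_ne_zero hd1 hD')]
    rw [show (1:K) - q = -(q-1) by ring, neg_pow (q-1), neg_pow q, pow_add (-1:K) j k]
    rcases Nat.even_or_odd j with hje | hje <;> simp only [hje.neg_one_pow] <;> ring
  have hB : q ^ 2 * ((q + 1)/q / ((q - 1)/q) ^ (j+k) * (c * (-1) ^ j / ((1 + q^(j+1))/q^(j+1))))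
      = (1 + q) * c * ((-1)^j * q^(2*j+k+2)) / ((q - 1) ^ (j+k) * (1 + q ^ (j + 1))) := by
    rw [div_pow, div_div_eq_mul_div, div_div_eq_mul_div, div_mul_div_comm]
    rw [← mul_div_assoc, div_eq_div_iff (mul_ne_zero hd1 hD') (mul_ne_zero hd1 hD')]
    field_simp
    ring
  rw [hA, hB, div_sub_div_same, div_mul_eq_mul_div,
    div_eq_div_iff (mul_ne_zero hd1 hD') hd1]
  ring

/-- The key algebraic identity over any field. -/
lemma aux_key_alg {K : Type*} [Field K] (q : K) (hq0 : q ≠ 0) (hq1 : q ≠ 1)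
    (hD : ∀ m : ℕ, (1:K) + q ^ (m + 1) ≠ 0) (N : ℕ) (hN : 1 ≤ N) :
    ∑ l ∈ range (N + 1), (N.choose l : K) * (-1) ^ l *
        ((1 + q) / (1 - q) ^ l *
          ∑ j ∈ range (l + 1), (l.choose j : K) * (-1) ^ j / (1 + q ^ (j + 1)))
    = (1 + q) + q ^ 2 * ((1 + q⁻¹) / (1 - q⁻¹) ^ N *
        ∑ j ∈ range (N + 1), (N.choose j : K) * (-1) ^ j / (1 + q⁻¹ ^ (j + 1))) := by
  have h1q : (1:K) - q ≠ 0 := sub_ne_zero.mpr fun h => hq1 h.symm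
  have hq1' : q - 1 ≠ 0 := sub_ne_zero.mpr hq1
  rw [aux_stepA q h1q hD N, Finset.mul_sum, Finset.mul_sum]
  have hterm : ∀ j ∈ range (N+1),
      (1 + q) * (N.choose j : K) * (-q) ^ (N - j) / ((1 - q) ^ N * (1 + q ^ (j + 1)))
      - q ^ 2 * ((1 + q⁻¹) / (1 - q⁻¹) ^ N * ((N.choose j : K) * (-1) ^ j / (1 + q⁻¹ ^ (j + 1))))
      = (1 + q) / (q - 1) ^ N *
          ((-1)^j * q^(N-j) * (N.choose j : K) - (-1)^j * (N.choose j : K) * q^(N+1)) := by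
    intro j hj
    have hjN : j ≤ N := by simp [Finset.mem_range] at hj; omega
    exact aux_hterm q hq0 hq1 N j hjN (hD j)
  refine sub_eq_iff_eq_add.mp ?_
  rw [← Finset.sum_sub_distrib, Finset.sum_congr rfl hterm, ← Finset.mul_sum]
  have hsum1 : ∑ j ∈ range (N+1), (-1:K)^j * q^(N-j) * (N.choose j : K) = (q-1)^N := by
    have h := add_pow (-1:K) q N
    rw [show (-1:K) + q = q - 1 by ring] at h
    exact h.symm
  have hsum2' : ∑ j ∈ range (N+1), (-1:K)^j * (N.choose j : K) * q^(N+1) = 0 := by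
    have hsum2 : ∑ j ∈ range (N+1), (-1:K)^j * (N.choose j : K) = 0 := by
      have h0 : ((-1:K) + 1)^N = 0 := by
        rw [neg_add_cancel]; exact zero_pow (by omega)
      rw [add_pow] at h0
      simpa using h0
    rw [← Finset.sum_mul, hsum2, zero_mul]
  rw [Finset.sum_sub_distrib, hsum1, hsum2', sub_zero]
  have hp1 : ((q:K)-1)^N ≠ 0 := pow_ne_zero _ hq1'
  field_simp

theorem stmt19 (p : ℕ) [Fact p.Prime] (hp : Odd p) (q : ℚ_[p]) (hq : ‖1 - q‖ < 1) (hq1 : q ≠ 1) (s : ℕ) (hs : 1 ≤ s) (n : Fin s → ℕ) (hN : 1 ≤ ∑ i, n i) :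
    ∑ l ∈ Finset.range ((∑ i, n i) + 1), ((∑ i, n i).choose l : ℚ_[p]) * (-1) ^ l * xi q l 0
      = (1 + q) + q ^ 2 * xi q⁻¹ (∑ i, n i) 0 := by
  have hq0 : q ≠ 0 := by
    intro h
    rw [h] at hq
    simp at hq
  have hqle : ‖q‖ ≤ 1 := by
    have hrw : q = 1 + -(1 - q) := by ring
    calc ‖q‖ = ‖(1:ℚ_[p]) + -(1 - q)‖ := by rw [← hrw]
      _ ≤ max ‖(1:ℚ_[p])‖ ‖-(1 - q)‖ := Padic.nonarchimedean _ _
      _ ≤ 1 := by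
          rw [norm_neg, norm_one]
          exact max_le le_rfl hq.le
  have hpow : ∀ m : ℕ, ‖1 - q ^ (m+1)‖ < 1 := by
    intro m
    induction m with
    | zero => simpa using hq
    | succ m ih =>
      have hsplit : 1 - q^(m+1+1) = (1 - q^(m+1)) + q^(m+1) * (1 - q) := by ring
      calc ‖1 - q^(m+1+1)‖ = ‖(1 - q^(m+1)) + q^(m+1)*(1-q)‖ := by rw [hsplit]
        _ ≤ max ‖1 - q^(m+1)‖ ‖q^(m+1)*(1-q)‖ := Padic.nonarchimedean _ _
        _ < 1 := by
            refine max_lt ih ?_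
            rw [norm_mul]
            calc ‖q^(m+1)‖ * ‖1-q‖ ≤ 1 * ‖1-q‖ := by
                  have : ‖q^(m+1)‖ ≤ 1 := by
                    rw [norm_pow]
                    exact pow_le_one₀ (norm_nonneg _) hqle
                  exact mul_le_mul_of_nonneg_right this (norm_nonneg _)
              _ = ‖1-q‖ := one_mul _
              _ < 1 := hq
  have h2 : ‖(2:ℚ_[p])‖ = 1 := by
    have hcast : ((2:ℤ) : ℚ_[p]) = (2:ℚ_[p]) := by push_cast; ring
    have hle : ‖(2:ℚ_[p])‖ ≤ 1 := by rw [← hcast]; exact Padic.norm_int_le_one 2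
    have hnlt : ¬ ‖(2:ℚ_[p])‖ < 1 := by
      rw [← hcast, Padic.norm_intCast_lt_one_iff]
      intro hdvd
      have hple : p ≤ 2 := Nat.le_of_dvd (by norm_num) (Int.ofNat_dvd.mp (by exact_mod_cast hdvd))
      have hp2 : 2 ≤ p := (Fact.out : p.Prime).two_le
      have : p = 2 := le_antisymm hple hp2
      rw [this] at hp
      exact (Nat.not_odd_iff_even.mpr (by norm_num)) hp
    exact le_antisymm hle (not_lt.mp hnlt)
  have hD : ∀ m : ℕ, (1:ℚ_[p]) + q^(m+1) ≠ 0 := by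
    intro m h
    have heq : (1:ℚ_[p]) - q^(m+1) = 2 := by
      have hx : q^(m+1) = -1 := by linear_combination h
      rw [hx]; norm_num
    have := hpow m
    rw [heq, h2] at this
    exact lt_irrefl 1 this
  have hxi : ∀ (r : ℚ_[p]) (l : ℕ), xi r l 0
      = (1 + r)/(1-r)^l * ∑ j ∈ range (l+1), (l.choose j : ℚ_[p]) * (-1)^j / (1 + r^(j+1)) := by
    intro r l
    simp [xi]
  simp only [hxi]
  exact aux_key_alg q hq0 hq1 hD _ hN
end
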